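/- Let π be a pmf on a finite set A with π(a) > 0 for all a, and let c_m : A → ℕ be counts with Σ_a c_m(a) = m, generated by the greedy rule: at each step, increment the count of an action a maximizing π(a) − c(a)/m over the current counts. Then for every a ∈ A and every m ≥ 1, the deviation satisfies |c_m(a)/m − π(a)| ≤ (|A|−1)/m, and consequently c_m(a)/m → π(a) as m → ∞. -/

import Mathlib

open Finset Filter

/-- Greedy most-under-sampled-action selection: the empirical frequencies track the
target pmf within `(|A|−1)/m`, and hence converge to the target pmf. -/
theorem greedy_counts_converge
    {A : Type*} [Fintype A] [DecidableEq A] [Nonempty A]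
    (π : A → ℝ) (hπ_pos : ∀ a, 0 < π a) (hπ_sum : ∑ a : A, π a = 1)
    (c : ℕ → A → ℕ) (hc0 : ∀ a, c 0 a = 0) (hcsum : ∀ m, ∑ a : A, c m a = m)
    (hgreedy : ∀ m : ℕ, ∃ astar : A,
      (∀ a : A, ((m : ℝ) + 1) * π a - c m a ≤ ((m : ℝ) + 1) * π astar - c m astar) ∧
      c (m + 1) = Function.update (c m) astar (c m astar + 1)) :
    (∀ a : A, ∀ m : ℕ, 1 ≤ m →
      |(c m a : ℝ) / m - π a| ≤ ((Fintype.card A : ℝ) - 1) / m) ∧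
    (∀ a : A, Tendsto (fun m : ℕ => (c m a : ℝ) / m) atTop (nhds (π a))) := by
  -- Key invariant: the deviation m·π(a) − c_m(a) is always > −1.
  have key : ∀ m : ℕ, ∀ a : A, -1 < (m : ℝ) * π a - c m a := by
    intro m
    induction m with
    | zero => intro a; simp [hc0]
    | succ n ih =>
      obtain ⟨astar, hmax, hupd⟩ := hgreedy n
      have hsum1 : ∑ b : A, (((n : ℝ) + 1) * π b - c n b) = 1 := by
        rw [Finset.sum_sub_distrib, ← Finset.mul_sum, hπ_sum, mul_one,
          ← Nat.cast_sum, hcsum]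
        ring
      have hex : ∃ b ∈ (univ : Finset A), (0 : ℝ) < ((n : ℝ) + 1) * π b - c n b := by
        by_contra h
        push_neg at h
        have hle : ∑ b : A, (((n : ℝ) + 1) * π b - c n b) ≤ 0 :=
          Finset.sum_nonpos (fun b _ => h b (mem_univ b))
        linarith
      obtain ⟨b0, _, hb0⟩ := hex
      have hpos : (0 : ℝ) < ((n : ℝ) + 1) * π astar - c n astar :=
        lt_of_lt_of_le hb0 (hmax b0)
      intro a
      rw [hupd]
      by_cases ha : a = astar
      · subst ha
        rw [Function.update_self]
        push_cast
        linarith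
      · rw [Function.update_of_ne ha]
        have h1 := ih a
        have h2 := hπ_pos a
        push_cast
        linarith
  -- deviations sum to zero
  have hzero : ∀ m : ℕ, ∑ b : A, ((m : ℝ) * π b - c m b) = 0 := by
    intro m
    rw [Finset.sum_sub_distrib, ← Finset.mul_sum, hπ_sum, mul_one,
      ← Nat.cast_sum, hcsum]
    ring
  have hcardpos : 1 ≤ Fintype.card A := Fintype.card_pos
  -- upper bound on deviation
  have hub : ∀ m : ℕ, ∀ a : A, (m : ℝ) * π a - c m a ≤ (Fintype.card A : ℝ) - 1 := by
    intro m a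
    have hsplit : ((m : ℝ) * π a - c m a) + ∑ b ∈ univ.erase a, ((m : ℝ) * π b - c m b)
        = 0 := by
      rw [Finset.add_sum_erase univ (fun b => (m : ℝ) * π b - c m b) (mem_univ a)]
      exact hzero m
    have hge : -(((Fintype.card A : ℝ)) - 1) ≤ ∑ b ∈ univ.erase a, ((m : ℝ) * π b - c m b) := by
      have hcard : ((univ.erase a).card : ℝ) = (Fintype.card A : ℝ) - 1 := by
        rw [Finset.card_erase_of_mem (mem_univ a), Finset.card_univ]
        push_cast [Nat.cast_sub hcardpos]
        ring
      calc -(((Fintype.card A : ℝ)) - 1) = ∑ _b ∈ univ.erase a, (-1 : ℝ) := by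
            rw [Finset.sum_const, nsmul_eq_mul, hcard]; ring
        _ ≤ _ := Finset.sum_le_sum (fun b _ => le_of_lt (key m b))
    linarith
  -- lower bound on deviation
  have hlb : ∀ m : ℕ, ∀ a : A, -(((Fintype.card A : ℝ)) - 1) ≤ (m : ℝ) * π a - c m a := by
    intro m a
    rcases lt_or_ge 1 (Fintype.card A) with h2 | h1
    · have : (2 : ℝ) ≤ (Fintype.card A : ℝ) := by exact_mod_cast h2
      have := key m a
      linarith
    · have h1' : Fintype.card A = 1 := le_antisymm h1 hcardpos
      obtain ⟨x, hx⟩ := Fintype.card_eq_one_iff.mp h1'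
      have hdev : ∑ b : A, ((m : ℝ) * π b - c m b) = (m : ℝ) * π a - c m a :=
        Finset.sum_eq_single_of_mem a (mem_univ a)
          (fun b _ hb => absurd ((hx b).trans (hx a).symm) hb)
      rw [hzero m] at hdev
      rw [← hdev, h1']
      norm_num
  have hbound : ∀ a : A, ∀ m : ℕ, 1 ≤ m →
      |(c m a : ℝ) / m - π a| ≤ ((Fintype.card A : ℝ) - 1) / m := by
    intro a m hm
    have hm0 : (0 : ℝ) < m := by exact_mod_cast hm
    have heq : (c m a : ℝ) / m - π a = -((m : ℝ) * π a - c m a) / m := by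
      field_simp
      ring
    rw [heq, abs_div, abs_neg, abs_of_pos hm0]
    gcongr
    rw [abs_le]
    exact ⟨hlb m a, hub m a⟩
  refine ⟨hbound, fun a => ?_⟩
  have h0 : Tendsto (fun m : ℕ => ((Fintype.card A : ℝ) - 1) / m) atTop (nhds 0) :=
    tendsto_const_div_atTop_nhds_zero_nat _
  have hsq : Tendsto (fun m : ℕ => (c m a : ℝ) / m - π a) atTop (nhds 0) := by
    apply squeeze_zero_norm' ?_ h0
    filter_upwards [eventually_ge_atTop 1] with m hm
    simpa using hbound a m hm
  have := hsq.add (tendsto_const_nhds (x := π a) (f := atTop (α := ℕ)))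
  simpa using this
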